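/- Let A be a simple unital C*-algebra, X a locally compact Hausdorff space, and I a closed two-sided ideal of C₀(X, A), necessarily of the form J̃(F) = {f : f|_F = 0} for a closed set F ⊆ X. Then the Lie normalizer N(I) = {f ∈ C₀(X,A) : [f, g] ∈ I for all g ∈ C₀(X,A)} equals I + {x ↦ h(x)·1 : h ∈ C₀(X)}. -/

import Mathlib

open scoped ZeroAtInfty

open StarAlgebra in
lemma my_cfc_central {A : Type*} [CStarAlgebra A] (z : A) (hz : ∀ a : A, z * a = a * z)
    (φ : ℂ → ℂ) (hφ : Continuous φ) (a : A) : cfc φ z * a = a * cfc φ z := by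
  have hnz : IsStarNormal z := ⟨(hz (star z)).symm⟩
  have hmem : cfc φ z ∈ elemental ℂ z := by
    rw [cfc_apply φ z hnz (hφ.continuousOn), cfcHom_eq_of_isStarNormal]
    exact SetLike.coe_mem _
  have hcl : IsClosed ((StarSubalgebra.centralizer ℂ (Set.univ : Set A) : Set A)) := by
    rw [StarSubalgebra.coe_centralizer]
    have h2 : (Set.univ ∪ star Set.univ : Set A).centralizer =
        ⋂ g ∈ (Set.univ ∪ star (Set.univ : Set A)), {y : A | g * y = y * g} := by
      ext y
      rw [Set.mem_centralizer_iff]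
      simp only [Set.mem_iInter, Set.mem_setOf_eq]
    rw [h2]
    exact isClosed_biInter fun g _ => isClosed_eq (by continuity) (by continuity)
  have hle : elemental ℂ z ≤ StarSubalgebra.centralizer ℂ (Set.univ : Set A) := by
    refine elemental.le_of_mem hcl ?_
    rw [StarSubalgebra.mem_centralizer_iff]
    exact fun g _ => ⟨(hz g).symm, (hz (star g)).symm⟩
  have := (StarSubalgebra.mem_centralizer_iff ℂ).mp (hle hmem) a (Set.mem_univ a)
  exact this.1.symm

lemma my_central_eq_smul_one {A : Type*} [CStarAlgebra A]
    (hsimple : ∀ I : TwoSidedIdeal A, IsClosed (I : Set A) → I = ⊥ ∨ I = ⊤)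
    (z : A) (hz : ∀ a : A, z * a = a * z) [Nontrivial A] : ∃ c : ℂ, z = c • 1 := by
  have hnz : IsStarNormal z := ⟨(hz (star z)).symm⟩
  obtain ⟨lam, hlam⟩ := spectrum.nonempty z
  have hsub : spectrum ℂ z ⊆ {lam} := by
    intro mu hmu
    by_contra hne
    have hne' : mu ≠ lam := by simpa using hne
    set r : ℝ := ‖mu - lam‖ / 2 with hr_def
    have hr : 0 < r := by
      have h : 0 < ‖mu - lam‖ := norm_pos_iff.mpr (sub_ne_zero.mpr hne')
      rw [hr_def]; linarith
    set φ : ℂ → ℂ := fun t => ((max 0 (1 - ‖t - lam‖ / r) : ℝ) : ℂ) with hφ_def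
    set ψ : ℂ → ℂ := fun t => ((max 0 (1 - ‖t - mu‖ / r) : ℝ) : ℂ) with hψ_def
    have hφc : Continuous φ := by fun_prop
    have hψc : Continuous ψ := by fun_prop
    have hvanish : ∀ c t : ℂ, r ≤ ‖t - c‖ → ((max 0 (1 - ‖t - c‖ / r) : ℝ) : ℂ) = 0 := by
      intro c t ht
      have : (1 : ℝ) - ‖t - c‖ / r ≤ 0 := by
        rw [sub_nonpos]
        exact (one_le_div hr).mpr ht
      rw [max_eq_left this]
      simp
    have hzero : ∀ t : ℂ, φ t * ψ t = 0 := by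
      intro t
      rcases le_or_gt r ‖t - lam‖ with h | h
      · rw [hφ_def]; simp only; rw [hvanish lam t h, zero_mul]
      · have h2 : r ≤ ‖t - mu‖ := by
          have htri : ‖mu - lam‖ ≤ ‖mu - t‖ + ‖t - lam‖ := by
            simpa using norm_sub_le_norm_sub_add_norm_sub mu t lam
          have : ‖mu - lam‖ = 2 * r := by rw [hr_def]; ring
          rw [norm_sub_rev]
          linarith
        rw [hψ_def]; simp only; rw [hvanish mu t h2, mul_zero]
    set p : A := cfc φ z with hp_def
    set q : A := cfc ψ z with hq_def
    have hone : ∀ c : ℂ, ((max 0 (1 - ‖c - c‖ / r) : ℝ) : ℂ) = 1 := by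
      intro c; simp
    have hpne : p ≠ 0 := by
      intro h0
      have h1 : (1 : ℂ) ∈ spectrum ℂ p := by
        rw [hp_def, cfc_map_spectrum φ z hnz hφc.continuousOn]
        exact ⟨lam, hlam, hone lam⟩
      rw [h0, spectrum.zero_eq] at h1
      simp at h1
    have hqne : q ≠ 0 := by
      intro h0
      have h1 : (1 : ℂ) ∈ spectrum ℂ q := by
        rw [hq_def, cfc_map_spectrum ψ z hnz hψc.continuousOn]
        exact ⟨mu, hmu, hone mu⟩
      rw [h0, spectrum.zero_eq] at h1
      simp at h1
    have hqp : q * p = 0 := by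
      rw [hp_def, hq_def, ← cfc_mul ψ φ z hψc.continuousOn hφc.continuousOn]
      have : (spectrum ℂ z).EqOn (fun t => ψ t * φ t) (fun _ => (0 : ℂ)) := by
        intro t _
        simp only
        rw [mul_comm]
        exact hzero t
      rw [cfc_congr this, cfc_const 0 z hnz, map_zero]
    have hp_central : ∀ a : A, p * a = a * p := my_cfc_central z hz φ hφc
    -- the closed two-sided ideal generated by p
    set M : Submodule ℂ A := LinearMap.range (LinearMap.mulLeft ℂ p) with hM_def
    set N : Submodule ℂ A := M.topologicalClosure with hN_def
    have hNcl : IsClosed (N : Set A) := M.isClosed_topologicalClosure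
    have hNset : (N : Set A) = closure (M : Set A) := rfl
    have hmul_left : ∀ (c : A) {x : A}, x ∈ N → c * x ∈ N := by
      intro c x hx
      rw [← SetLike.mem_coe, hNset] at hx ⊢
      refine map_mem_closure (f := fun b => c * b) (continuous_mul_left c) hx ?_
      rintro y ⟨a, rfl⟩
      refine ⟨c * a, ?_⟩
      simp only [LinearMap.mulLeft_apply]
      rw [← mul_assoc, hp_central c, mul_assoc]
    have hmul_right : ∀ (c : A) {x : A}, x ∈ N → x * c ∈ N := by
      intro c x hx
      rw [← SetLike.mem_coe, hNset] at hx ⊢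
      refine map_mem_closure (f := fun b => b * c) (continuous_mul_right c) hx ?_
      rintro y ⟨a, rfl⟩
      refine ⟨a * c, ?_⟩
      simp only [LinearMap.mulLeft_apply]
      rw [mul_assoc]
    set I : TwoSidedIdeal A := TwoSidedIdeal.mk' (N : Set A) N.zero_mem
      (fun hx hy => N.add_mem hx hy) (fun hx => N.neg_mem hx)
      (fun hy => hmul_left _ hy) (fun hx => hmul_right _ hx) with hI_def
    have hIset : (I : Set A) = (N : Set A) :=
      TwoSidedIdeal.coe_mk' _ _ _ _ _ _
    have hIcl : IsClosed (I : Set A) := hIset ▸ hNcl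
    have hpI : p ∈ I := by
      rw [hI_def, TwoSidedIdeal.mem_mk']
      exact M.le_topologicalClosure ⟨1, by simp [LinearMap.mulLeft_apply]⟩
    rcases hsimple I hIcl with hbot | htop
    · rw [hbot, TwoSidedIdeal.mem_bot] at hpI
      exact hpne hpI
    · have h1I : (1 : A) ∈ I := htop ▸ trivial
      rw [hI_def, TwoSidedIdeal.mem_mk'] at h1I
      rw [show ((N : Set A) : Set A) = closure (M : Set A) from rfl] at h1I
      have hq_ann : (1 : A) ∈ {y : A | q * y = 0} := by
        refine closure_minimal ?_ ?_ h1I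
        · rintro y ⟨a, rfl⟩
          simp [LinearMap.mulLeft_apply, ← mul_assoc, hqp]
        · exact isClosed_singleton.preimage (continuous_mul_left q)
      rw [Set.mem_setOf_eq, mul_one] at hq_ann
      exact hqne hq_ann
  refine ⟨lam, ?_⟩
  have h1 : z = cfc (fun t : ℂ => t) z := (cfc_id' ℂ z hnz).symm
  have h2 : (spectrum ℂ z).EqOn (fun t : ℂ => t) (fun _ => lam) := by
    intro t ht
    simpa using hsub ht
  rw [h1, cfc_congr h2, cfc_const lam z hnz, Algebra.algebraMap_eq_smul_one]

/-- Let `A` be a simple unital C*-algebra, `X` a locally compact Hausdorff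
space, and `I = J̃(F) = {f ∈ C₀(X,A) | f ≡ 0 on F}` (`F ⊆ X` closed) a closed ideal of
`C₀(X, A)`.  Then the Lie normalizer `N(I) = {f | [f, g] ∈ I for all g}` equals
`I + {x ↦ h(x)·1 | h ∈ C₀(X)}`. -/
theorem lieNormalizer_vanishing_ideal_of_simple_unital
    (A : Type*) [NormedRing A] [StarRing A] [CStarRing A] [NormedAlgebra ℂ A]
    [StarModule ℂ A] [CompleteSpace A]
    (hsimple : ∀ I : TwoSidedIdeal A, IsClosed (I : Set A) → I = ⊥ ∨ I = ⊤)
    (X : Type*) [TopologicalSpace X] [T2Space X] [LocallyCompactSpace X]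
    (F : Set X) (hF : IsClosed F) :
    {f : C₀(X, A) | ∀ g : C₀(X, A), ∀ x ∈ F, f x * g x - g x * f x = 0} =
      {f : C₀(X, A) | ∃ (j : C₀(X, A)) (h : C₀(X, ℂ)),
        (∀ x ∈ F, j x = 0) ∧ ∀ x : X, f x = j x + h x • (1 : A)} := by
  letI : CStarAlgebra A :=
    { ‹NormedRing A›, ‹StarRing A›, ‹CStarRing A›, ‹NormedAlgebra ℂ A›,
      ‹StarModule ℂ A›, ‹CompleteSpace A› with }
  ext f
  simp only [Set.mem_setOf_eq]
  constructor
  · intro hf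
    by_cases hA : Subsingleton A
    · exact ⟨f, 0, fun x _ => Subsingleton.elim _ _, fun x => Subsingleton.elim _ _⟩
    have : Nontrivial A := not_subsingleton_iff_nontrivial.mp hA
    have hcentral : ∀ x ∈ F, ∀ a : A, f x * a = a * f x := by
      intro x hx a
      obtain ⟨χ, hχ1, hχ0, hχsupp, hχbd⟩ :=
        exists_continuous_one_zero_of_isCompact (isCompact_singleton (x := x))
          isClosed_empty (by simp)
      set g : C₀(X, A) :=
        { toFun := fun y => χ y • a
          continuous_toFun := (map_continuous χ).smul continuous_const
          zero_at_infty' := by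
            have h0 : Filter.Tendsto χ (Filter.cocompact X) (nhds 0) :=
              hχsupp.is_zero_at_infty
            simpa using h0.smul_const a } with hg_def
      have h1 := hf g x hx
      have hgx : g x = a := by
        show χ x • a = a
        rw [hχ1 (Set.mem_singleton x)]
        simp
      rw [hgx] at h1
      exact sub_eq_zero.mp h1
    obtain ⟨g₀, hg₀norm, hg₀val⟩ := exists_dual_vector ℂ (1 : A) (norm_ne_zero_iff.mpr one_ne_zero)
    set φ : A →L[ℂ] ℂ := (((‖(1 : A)‖ : ℂ))⁻¹ : ℂ) • g₀ with hφ_def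
    have hn1 : ((‖(1 : A)‖ : ℂ)) ≠ 0 := by
      simpa using norm_ne_zero_iff.mpr (one_ne_zero (α := A))
    have hφ1 : φ 1 = 1 := by
      rw [hφ_def]
      simp only [ContinuousLinearMap.smul_apply, hg₀val, smul_eq_mul]
      exact inv_mul_cancel₀ hn1
    set h : C₀(X, ℂ) :=
      { toFun := fun y => φ (f y)
        continuous_toFun := φ.continuous.comp (map_continuous f)
        zero_at_infty' := by
          have := (φ.continuous.tendsto 0).comp (zero_at_infty f)
          simpa [Function.comp_def] using this } with hh_def
    set j : C₀(X, A) :=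
      { toFun := fun y => f y - φ (f y) • (1 : A)
        continuous_toFun := (map_continuous f).sub
          ((φ.continuous.comp (map_continuous f)).smul continuous_const)
        zero_at_infty' := by
          have h2 := ((φ.continuous.tendsto 0).comp
            (zero_at_infty f)).smul_const (1 : A)
          have h3 := (zero_at_infty f).sub h2
          simpa using h3 } with hj_def
    refine ⟨j, h, ?_, ?_⟩
    · intro x hx
      obtain ⟨c, hc⟩ := my_central_eq_smul_one hsimple (f x) (hcentral x hx)
      show f x - φ (f x) • (1 : A) = 0
      rw [hc, map_smul, hφ1, smul_eq_mul, mul_one, sub_self]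
    · intro x
      show f x = (f x - φ (f x) • (1 : A)) + φ (f x) • (1 : A)
      abel
  · rintro ⟨j, h, hj, hfx⟩ g x hx
    rw [hfx x, hj x hx, zero_add, smul_mul_assoc, one_mul, mul_smul_comm, mul_one, sub_self]
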